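/- Let (X, x₀), (Y, y₀) and (Z, z₀) be pointed Hausdorff topological spaces. Give the wedge sum X ∨ Y (the quotient of the topological sum X ⊕ Y identifying the two basepoints, with the quotient topology, pointed at the identified basepoint) its two canonical inclusions ι_X : X → X ∨ Y and ι_Y : Y → X ∨ Y. Let C*(A, B) denote the set of basepoint-preserving continuous maps with the subspace compact-open topology inside C(A, B). Then the map C*(X ∨ Y, Z) → C*(X, Z) × C*(Y, Z) sending h to (h ∘ ι_X, h ∘ ι_Y) is a homeomorphism. -/

import Mathlib

open ContinuousMap

/-- The wedge sum of two pointed topological spaces `(X, x₀)` and `(Y, y₀)`: the quotient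
of the topological sum `X ⊕ Y` identifying `inl x₀` with `inr y₀`, with the quotient
topology. -/
def Wedge (X Y : Type*) (x₀ : X) (y₀ : Y) : Type _ :=
  Quot (fun a b : X ⊕ Y => a = Sum.inl x₀ ∧ b = Sum.inr y₀)

instance (X Y : Type*) [TopologicalSpace X] [TopologicalSpace Y] (x₀ : X) (y₀ : Y) :
    TopologicalSpace (Wedge X Y x₀ y₀) :=
  inferInstanceAs (TopologicalSpace (Quot _))

section

variable {X Y : Type*} [TopologicalSpace X] [TopologicalSpace Y] (x₀ : X) (y₀ : Y)

/-- The canonical inclusion `ι_X : X → X ∨ Y`. -/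
def wedgeInl : C(X, Wedge X Y x₀ y₀) :=
  ⟨fun x => Quot.mk _ (Sum.inl x), continuous_quot_mk.comp continuous_inl⟩

/-- The canonical inclusion `ι_Y : Y → X ∨ Y`. -/
def wedgeInr : C(Y, Wedge X Y x₀ y₀) :=
  ⟨fun y => Quot.mk _ (Sum.inr y), continuous_quot_mk.comp continuous_inr⟩

end

variable {X Y Z : Type*} [TopologicalSpace X] [TopologicalSpace Y] [TopologicalSpace Z]

/-- The restriction map `C*(X ∨ Y, Z) → C*(X, Z) × C*(Y, Z)`, `h ↦ (h ∘ ι_X, h ∘ ι_Y)`,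
where `C*(A, B)` denotes the basepoint-preserving continuous maps with the subspace
compact-open topology. -/
def wedgeRestrict (x₀ : X) (y₀ : Y) (z₀ : Z)
    (h : {h : C(Wedge X Y x₀ y₀, Z) // h (Quot.mk _ (Sum.inl x₀)) = z₀}) :
    {f : C(X, Z) // f x₀ = z₀} × {g : C(Y, Z) // g y₀ = z₀} :=
  (⟨h.val.comp (wedgeInl x₀ y₀), h.property⟩,
   ⟨h.val.comp (wedgeInr x₀ y₀),
     (congrArg h.val (Quot.sound ⟨rfl, rfl⟩ :
        (Quot.mk _ (Sum.inl x₀) : Wedge X Y x₀ y₀) = Quot.mk _ (Sum.inr y₀))).symm.trans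
       h.property⟩)

section AuxWedge

variable (x₀ : X) (y₀ : Y)

/-- Retraction of the wedge onto `X`. -/
def wedgeRetrX : C(Wedge X Y x₀ y₀, X) :=
  ⟨Quot.lift (Sum.elim id fun _ => x₀) (by rintro a b ⟨rfl, rfl⟩; rfl),
    continuous_quot_lift _ (continuous_id.sumElim continuous_const)⟩

/-- Retraction of the wedge onto `Y`. -/
def wedgeRetrY : C(Wedge X Y x₀ y₀, Y) :=
  ⟨Quot.lift (Sum.elim (fun _ => y₀) id) (by rintro a b ⟨rfl, rfl⟩; rfl),
    continuous_quot_lift _ (continuous_const.sumElim continuous_id)⟩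

lemma isClosedEmbedding_wedgeInl [T1Space Y] :
    Topology.IsClosedEmbedding (wedgeInl x₀ y₀ : C(X, Wedge X Y x₀ y₀)) := by
  have hind : Topology.IsInducing (wedgeInl x₀ y₀ : C(X, Wedge X Y x₀ y₀)) := by
    refine Topology.IsInducing.of_comp (wedgeInl x₀ y₀).continuous
      (wedgeRetrX x₀ y₀).continuous ?_
    have h : (wedgeRetrX x₀ y₀ : Wedge X Y x₀ y₀ → X) ∘ (wedgeInl x₀ y₀) = id := rfl
    rw [h]; exact Topology.IsInducing.id
  have hinj : Function.Injective (wedgeInl x₀ y₀ : C(X, Wedge X Y x₀ y₀)) := fun a b h =>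
    congrArg (wedgeRetrX x₀ y₀) h
  refine ⟨⟨hind, hinj⟩, ?_⟩
  refine (isQuotientMap_quot_mk.isClosed_preimage).mp ?_
  have hpre : (Quot.mk _ : X ⊕ Y → Wedge X Y x₀ y₀) ⁻¹'
      Set.range (wedgeInl x₀ y₀ : C(X, Wedge X Y x₀ y₀)) =
      {a : X ⊕ Y | ∀ y, a = Sum.inr y → y = y₀} := by
    ext a
    cases a with
    | inl x =>
      simp only [Set.mem_preimage, Set.mem_range, Set.mem_setOf_eq]
      exact ⟨fun _ y h => absurd h Sum.inl_ne_inr, fun _ => ⟨x, rfl⟩⟩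
    | inr y =>
      simp only [Set.mem_preimage, Set.mem_range, Set.mem_setOf_eq]
      constructor
      · rintro ⟨x, hx⟩ y' hy'
        cases hy'
        exact (congrArg (wedgeRetrY x₀ y₀) hx).symm
      · intro h
        have hy : y = y₀ := h y rfl
        subst hy
        exact ⟨x₀, (Quot.sound ⟨rfl, rfl⟩)⟩
  erw [hpre]
  rw [isClosed_sum_iff]
  constructor
  · convert isClosed_univ
    ext x
    simp only [Set.mem_preimage, Set.mem_setOf_eq, Set.mem_univ, iff_true]
    intro y h; cases h
  · convert isClosed_singleton (x := y₀)
    ext y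
    simp only [Set.mem_preimage, Set.mem_setOf_eq, Set.mem_singleton_iff]
    exact ⟨fun h => h y rfl, fun h y' hy' => by cases hy'; exact h⟩

lemma isClosedEmbedding_wedgeInr [T1Space X] :
    Topology.IsClosedEmbedding (wedgeInr x₀ y₀ : C(Y, Wedge X Y x₀ y₀)) := by
  have hind : Topology.IsInducing (wedgeInr x₀ y₀ : C(Y, Wedge X Y x₀ y₀)) := by
    refine Topology.IsInducing.of_comp (wedgeInr x₀ y₀).continuous
      (wedgeRetrY x₀ y₀).continuous ?_
    have h : (wedgeRetrY x₀ y₀ : Wedge X Y x₀ y₀ → Y) ∘ (wedgeInr x₀ y₀) = id := rfl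
    rw [h]; exact Topology.IsInducing.id
  have hinj : Function.Injective (wedgeInr x₀ y₀ : C(Y, Wedge X Y x₀ y₀)) := fun a b h =>
    congrArg (wedgeRetrY x₀ y₀) h
  refine ⟨⟨hind, hinj⟩, ?_⟩
  refine (isQuotientMap_quot_mk.isClosed_preimage).mp ?_
  have hpre : (Quot.mk _ : X ⊕ Y → Wedge X Y x₀ y₀) ⁻¹'
      Set.range (wedgeInr x₀ y₀ : C(Y, Wedge X Y x₀ y₀)) =
      {a : X ⊕ Y | ∀ x, a = Sum.inl x → x = x₀} := by
    ext a
    cases a with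
    | inr y =>
      simp only [Set.mem_preimage, Set.mem_range, Set.mem_setOf_eq]
      exact ⟨fun _ x h => absurd h Sum.inr_ne_inl, fun _ => ⟨y, rfl⟩⟩
    | inl x =>
      simp only [Set.mem_preimage, Set.mem_range, Set.mem_setOf_eq]
      constructor
      · rintro ⟨y, hy⟩ x' hx'
        cases hx'
        exact (congrArg (wedgeRetrX x₀ y₀) hy).symm
      · intro h
        have hx : x = x₀ := h x rfl
        subst hx
        exact ⟨y₀, (Quot.sound ⟨rfl, rfl⟩).symm⟩
  erw [hpre]
  rw [isClosed_sum_iff]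
  constructor
  · convert isClosed_singleton (x := x₀)
    ext x
    simp only [Set.mem_preimage, Set.mem_setOf_eq, Set.mem_singleton_iff]
    exact ⟨fun h => h x rfl, fun h x' hx' => by cases hx'; exact h⟩
  · convert isClosed_univ
    ext y
    simp only [Set.mem_preimage, Set.mem_setOf_eq, Set.mem_univ, iff_true]
    intro x h; cases h

end AuxWedge

/-- The inverse of `wedgeRestrict`: glue two pointed maps along the basepoint. -/
def wedgeCorestrict (x₀ : X) (y₀ : Y) (z₀ : Z)
    (p : {f : C(X, Z) // f x₀ = z₀} × {g : C(Y, Z) // g y₀ = z₀}) :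
    {h : C(Wedge X Y x₀ y₀, Z) // h (Quot.mk _ (Sum.inl x₀)) = z₀} :=
  ⟨⟨Quot.lift (Sum.elim p.1.val p.2.val)
      (by rintro a b ⟨rfl, rfl⟩
          simp [p.1.property, p.2.property]),
    continuous_quot_lift _ (p.1.val.continuous.sumElim p.2.val.continuous)⟩,
   p.1.property⟩

lemma wedgeCorestrict_mapsTo_iff (x₀ : X) (y₀ : Y) (z₀ : Z)
    (p : {f : C(X, Z) // f x₀ = z₀} × {g : C(Y, Z) // g y₀ = z₀})
    (K : Set (Wedge X Y x₀ y₀)) (U : Set Z) :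
    Set.MapsTo ((wedgeCorestrict x₀ y₀ z₀ p).val) K U ↔
      Set.MapsTo p.1.val ((wedgeInl x₀ y₀) ⁻¹' K) U ∧
      Set.MapsTo p.2.val ((wedgeInr x₀ y₀) ⁻¹' K) U := by
  constructor
  · intro h
    exact ⟨fun x hx => h hx, fun y hy => h hy⟩
  · rintro ⟨h1, h2⟩ k hk
    induction k using Quot.ind with
    | _ a =>
      cases a with
      | inl x => exact h1 hk
      | inr y => exact h2 hk

/-- For pointed Hausdorff spaces `(X, x₀)`, `(Y, y₀)`, `(Z, z₀)`, the map
`C*(X ∨ Y, Z) → C*(X, Z) × C*(Y, Z)` sending `h` to `(h ∘ ι_X, h ∘ ι_Y)` is a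
homeomorphism (all mapping spaces carry the (subspace) compact-open topology). -/
theorem isHomeomorph_wedgeRestrict [T2Space X] [T2Space Y] [T2Space Z]
    (x₀ : X) (y₀ : Y) (z₀ : Z) :
    IsHomeomorph (wedgeRestrict x₀ y₀ z₀) := by
  rw [isHomeomorph_iff_exists_inverse]
  refine ⟨?_, wedgeCorestrict x₀ y₀ z₀, ?_, ?_, ?_⟩
  · -- continuity of `wedgeRestrict`
    apply Continuous.prodMk
    · exact ((continuous_precomp (wedgeInl x₀ y₀)).comp continuous_subtype_val).subtype_mk _
    · exact ((continuous_precomp (wedgeInr x₀ y₀)).comp continuous_subtype_val).subtype_mk _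
  · -- left inverse
    intro h
    apply Subtype.ext
    apply ContinuousMap.ext
    intro k
    induction k using Quot.ind with
    | _ a => cases a with
      | inl x => rfl
      | inr y => rfl
  · -- right inverse
    intro p
    apply Prod.ext
    · exact Subtype.ext (ContinuousMap.ext fun x => rfl)
    · exact Subtype.ext (ContinuousMap.ext fun y => rfl)
  · -- continuity of the inverse
    refine Continuous.subtype_mk ?_ _
    rw [continuous_compactOpen]
    intro K hK U hU
    have hSX : IsCompact ((wedgeInl x₀ y₀) ⁻¹' K) :=
      (isClosedEmbedding_wedgeInl x₀ y₀).isCompact_preimage hK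
    have hSY : IsCompact ((wedgeInr x₀ y₀) ⁻¹' K) :=
      (isClosedEmbedding_wedgeInr x₀ y₀).isCompact_preimage hK
    have heq : {p : {f : C(X, Z) // f x₀ = z₀} × {g : C(Y, Z) // g y₀ = z₀} |
        Set.MapsTo ((wedgeCorestrict x₀ y₀ z₀ p).val) K U} =
        ((fun p : {f : C(X, Z) // f x₀ = z₀} × {g : C(Y, Z) // g y₀ = z₀} => p.1.val) ⁻¹'
          {f : C(X, Z) | Set.MapsTo f ((wedgeInl x₀ y₀) ⁻¹' K) U}) ∩
        ((fun p : {f : C(X, Z) // f x₀ = z₀} × {g : C(Y, Z) // g y₀ = z₀} => p.2.val) ⁻¹'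
          {g : C(Y, Z) | Set.MapsTo g ((wedgeInr x₀ y₀) ⁻¹' K) U}) := by
      ext p
      simpa using wedgeCorestrict_mapsTo_iff x₀ y₀ z₀ p K U
    show IsOpen {p : {f : C(X, Z) // f x₀ = z₀} × {g : C(Y, Z) // g y₀ = z₀} |
        Set.MapsTo ((wedgeCorestrict x₀ y₀ z₀ p).val : Wedge X Y x₀ y₀ → Z) K U}
    rw [heq]
    exact ((isOpen_setOf_mapsTo hSX hU).preimage
        (continuous_subtype_val.comp continuous_fst)).inter
      ((isOpen_setOf_mapsTo hSY hU).preimage (continuous_subtype_val.comp continuous_snd))
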